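/- arXiv:1703.03179 — 8 statements merged into one kernel-verified Lean document; each statement's English description precedes it below -/
import Mathlib

section
/- For constants 0 < β < 1 and r > 0, the function f₀(t) = α − (1 − t)·log₂(β·2^{r/(1−t)} + 1 − β) is non-increasing on [0, 1), for any real constant α. -/
open Real Set

theorem stmt_1 (r β α : ℝ) (hr : 0 < r) (hβ0 : 0 < β) (hβ1 : β < 1)
    (f₀ : ℝ → ℝ)
    (hf : ∀ t : ℝ, f₀ t =
      α - (1 - t) * Real.logb 2 (β * (2:ℝ) ^ (r / (1 - t)) + 1 - β)) :
    AntitoneOn f₀ (Set.Ico (0:ℝ) 1) := by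
  intro t₁ ht₁ t₂ ht₂ h12
  rw [hf, hf]
  set s₁ : ℝ := 1 - t₁ with hs₁
  set s₂ : ℝ := 1 - t₂ with hs₂
  have hs₂0 : 0 < s₂ := by simp [hs₂]; linarith [ht₂.2]
  have hs21 : s₂ ≤ s₁ := by simp [hs₁, hs₂]; linarith
  have hs₁0 : 0 < s₁ := lt_of_lt_of_le hs₂0 hs21
  set a : ℝ := r / s₁ with ha
  set b : ℝ := r / s₂ with hb
  have hb0 : 0 < b := div_pos hr hs₂0
  have ha0 : 0 < a := div_pos hr hs₁0
  set l : ℝ := s₂ / s₁ with hl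
  have hl0 : 0 < l := div_pos hs₂0 hs₁0
  have hl1 : l ≤ 1 := by
    rw [hl, div_le_one hs₁0]; exact hs21
  have hab : a = l * b := by
    rw [ha, hb, hl, div_mul_div_comm, mul_comm s₂ r, mul_div_mul_right _ _ hs₂0.ne']
  have h2b1 : (1:ℝ) ≤ (2:ℝ) ^ b := by
    rw [show (1:ℝ) = (2:ℝ) ^ (0:ℝ) by simp]
    exact Real.rpow_le_rpow_left_iff (by norm_num) |>.mpr hb0.le
  -- concavity of x ^ l at points 2^b and 1
  have hmem1 : (2:ℝ) ^ b ∈ Set.Ici (0:ℝ) := by simp [Set.mem_Ici]; positivity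
  have hmem2 : (1:ℝ) ∈ Set.Ici (0:ℝ) := by simp [Set.mem_Ici]
  have hconc := (Real.concaveOn_rpow hl0.le hl1).2 hmem1 hmem2
    hβ0.le (sub_nonneg.mpr hβ1.le) (by ring)
  simp only [smul_eq_mul, mul_one, Real.one_rpow] at hconc
  have key : β * (2:ℝ) ^ a + 1 - β ≤ (β * (2:ℝ) ^ b + 1 - β) ^ l := by
    have h2a : (2:ℝ) ^ a = ((2:ℝ) ^ b) ^ l := by
      rw [hab, mul_comm, Real.rpow_mul (by norm_num)]
    rw [h2a]
    calc β * ((2:ℝ) ^ b) ^ l + 1 - β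
        = β * ((2:ℝ) ^ b) ^ l + (1 - β) * 1 ^ l := by simp [Real.one_rpow]; ring
      _ ≤ (β * (2:ℝ) ^ b + (1 - β)) ^ l := by
          simpa [Real.one_rpow] using hconc
      _ = (β * (2:ℝ) ^ b + 1 - β) ^ l := by ring_nf
  have hE₁pos : (0:ℝ) < β * (2:ℝ) ^ a + 1 - β := by
    have : (0:ℝ) < (2:ℝ) ^ a := by positivity
    nlinarith
  have hE₂pos : (0:ℝ) < β * (2:ℝ) ^ b + 1 - β := by
    have : (0:ℝ) < (2:ℝ) ^ b := by positivity
    nlinarith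
  have hlog : Real.logb 2 (β * (2:ℝ) ^ a + 1 - β) ≤ l * Real.logb 2 (β * (2:ℝ) ^ b + 1 - β) := by
    calc Real.logb 2 (β * (2:ℝ) ^ a + 1 - β)
        ≤ Real.logb 2 ((β * (2:ℝ) ^ b + 1 - β) ^ l) :=
          Real.logb_le_logb_of_le (by norm_num) hE₁pos key
      _ = l * Real.logb 2 (β * (2:ℝ) ^ b + 1 - β) := Real.logb_rpow_eq_mul_logb_of_pos hE₂pos
  have : s₁ * Real.logb 2 (β * (2:ℝ) ^ a + 1 - β) ≤ s₂ * Real.logb 2 (β * (2:ℝ) ^ b + 1 - β) := by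
    have := mul_le_mul_of_nonneg_left hlog hs₁0.le
    have hs : s₁ * l = s₂ := by rw [hl, mul_div_assoc', mul_comm, mul_div_assoc, div_self hs₁0.ne', mul_one]
    rw [← mul_assoc, hs] at this
    exact this
  linarith [this]
end

section
/- For constants 0 < β < 1 and r > 0, the second derivative of f₀(t) = α − (1 − t)·log₂(β·2^{r/(1−t)} + 1 − β) satisfies f₀''(t) = −(β(1−β)r²·2^{r/(1−t)}·ln 2)/((1−t)³·(β·2^{r/(1−t)} + 1 − β)²) ≤ 0 for all t ∈ [0,1); hence f₀ is concave on [0,1). -/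
open Real Set

noncomputable def Efun (r t : ℝ) : ℝ := (2:ℝ) ^ (r / (1 - t))

noncomputable def gfun (r β t : ℝ) : ℝ := β * Efun r t + 1 - β

noncomputable def f1fun (r β t : ℝ) : ℝ :=
  Real.log (gfun r β t) / Real.log 2 - β * Efun r t * (r / (1 - t)) / gfun r β t

lemma Efun_pos (r t : ℝ) : 0 < Efun r t := Real.rpow_pos_of_pos two_pos _

lemma gfun_pos (r : ℝ) {β : ℝ} (hβ0 : 0 < β) (hβ1 : β < 1) (t : ℝ) :
    0 < gfun r β t := by
  have hE := Efun_pos r t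
  unfold gfun
  nlinarith

lemma hasDerivAt_ufun (r : ℝ) {t : ℝ} (ht : t < 1) :
    HasDerivAt (fun s => r / (1 - s)) (r / (1 - t) ^ 2) t := by
  have hne : (1 - t) ≠ 0 := by linarith
  have h1 : HasDerivAt (fun s : ℝ => 1 - s) (-1) t := by
    simpa using (hasDerivAt_id t).const_sub (1:ℝ)
  have h3 := (h1.inv hne).const_mul r
  have heq : (fun s : ℝ => r * (1 - s)⁻¹) = fun s => r / (1 - s) := by
    funext s; rw [div_eq_mul_inv]
  rw [← heq]
  refine h3.congr_deriv ?_
  field_simp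

lemma hasDerivAt_Efun (r : ℝ) {t : ℝ} (ht : t < 1) :
    HasDerivAt (Efun r) (Efun r t * Real.log 2 * (r / (1 - t) ^ 2)) t := by
  have h := (Real.hasStrictDerivAt_const_rpow (by norm_num : (0:ℝ) < 2)
    (r / (1 - t))).hasDerivAt.comp t (hasDerivAt_ufun r ht)
  unfold Efun
  exact h

lemma hasDerivAt_gfun (r β : ℝ) {t : ℝ} (ht : t < 1) :
    HasDerivAt (gfun r β) (β * Efun r t * Real.log 2 * (r / (1 - t) ^ 2)) t := by
  have h := (((hasDerivAt_Efun r ht).const_mul β).add_const 1).sub_const β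
  unfold gfun
  refine h.congr_deriv ?_
  ring

lemma hasDerivAt_f0 (r α : ℝ) {β t : ℝ} (hβ0 : 0 < β) (hβ1 : β < 1) (ht : t < 1) :
    HasDerivAt (fun s => α - (1 - s) * Real.logb 2 (β * (2:ℝ) ^ (r / (1 - s)) + 1 - β))
      (f1fun r β t) t := by
  have hne : (1 - t) ≠ 0 := by linarith
  have hg := gfun_pos r hβ0 hβ1 t
  have hgne : gfun r β t ≠ 0 := ne_of_gt hg
  have hl2 : Real.log 2 ≠ 0 := ne_of_gt (Real.log_pos one_lt_two)
  have h1 : HasDerivAt (fun s : ℝ => 1 - s) (-1) t := by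
    simpa using (hasDerivAt_id t).const_sub (1:ℝ)
  have hlog : HasDerivAt (fun s => Real.log (gfun r β s))
      (β * Efun r t * Real.log 2 * (r / (1 - t) ^ 2) / gfun r β t) t :=
    (hasDerivAt_gfun r β ht).log hgne
  have hmul := h1.mul hlog
  have hdiv := hmul.div_const (Real.log 2)
  have h := (hasDerivAt_const t α).sub hdiv
  have heq : (fun s : ℝ => α - (1 - s) * Real.log (gfun r β s) / Real.log 2)
      = fun s => α - (1 - s) * Real.logb 2 (β * (2:ℝ) ^ (r / (1 - s)) + 1 - β) := by
    funext s
    simp [Real.logb, gfun, Efun, mul_div_assoc]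
  rw [← heq]
  refine h.congr_deriv ?_
  unfold f1fun
  field_simp
  ring

lemma hasDerivAt_f1 (r : ℝ) {β t : ℝ} (hβ0 : 0 < β) (hβ1 : β < 1) (ht : t < 1) :
    HasDerivAt (f1fun r β)
      (-(β * (1 - β) * r ^ 2 * Efun r t * Real.log 2) /
        ((1 - t) ^ 3 * (β * Efun r t + 1 - β) ^ 2)) t := by
  have hne : (1 - t) ≠ 0 := by linarith
  have hg := gfun_pos r hβ0 hβ1 t
  have hgne : gfun r β t ≠ 0 := ne_of_gt hg
  have hgne' : β * Efun r t + 1 - β ≠ 0 := hgne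
  have hl2 : Real.log 2 ≠ 0 := ne_of_gt (Real.log_pos one_lt_two)
  have hA : HasDerivAt (fun s => Real.log (gfun r β s) / Real.log 2)
      (β * Efun r t * Real.log 2 * (r / (1 - t) ^ 2) / gfun r β t / Real.log 2) t :=
    (((hasDerivAt_gfun r β ht).log hgne)).div_const _
  have hN : HasDerivAt (fun s => β * Efun r s * (r / (1 - s)))
      (β * (Efun r t * Real.log 2 * (r / (1 - t) ^ 2)) * (r / (1 - t))
        + β * Efun r t * (r / (1 - t) ^ 2)) t :=
    ((hasDerivAt_Efun r ht).const_mul β).mul (hasDerivAt_ufun r ht)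
  have hB := hN.div (hasDerivAt_gfun r β ht) hgne
  have h := hA.sub hB
  have heq : (fun s => Real.log (gfun r β s) / Real.log 2
      - β * Efun r s * (r / (1 - s)) / gfun r β s) = f1fun r β := by
    funext s; rfl
  rw [← heq]
  refine h.congr_deriv ?_
  simp only [gfun]
  field_simp
  ring

theorem stmt_2 (r β α : ℝ) (hr : 0 < r) (hβ0 : 0 < β) (hβ1 : β < 1)
    (f₀ : ℝ → ℝ)
    (hf : ∀ t : ℝ, f₀ t =
      α - (1 - t) * Real.logb 2 (β * (2:ℝ) ^ (r / (1 - t)) + 1 - β)) :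
    (∀ t ∈ Set.Ico (0:ℝ) 1,
      deriv (deriv f₀) t =
        -(β * (1 - β) * r ^ 2 * (2:ℝ) ^ (r / (1 - t)) * Real.log 2) /
          ((1 - t) ^ 3 * (β * (2:ℝ) ^ (r / (1 - t)) + 1 - β) ^ 2) ∧
      deriv (deriv f₀) t ≤ 0) ∧
    ConcaveOn ℝ (Set.Ico (0:ℝ) 1) f₀ := by
  have hfe : f₀ = fun s => α - (1 - s) * Real.logb 2 (β * (2:ℝ) ^ (r / (1 - s)) + 1 - β) :=
    funext hf
  have hd0 : ∀ t : ℝ, t < 1 → HasDerivAt f₀ (f1fun r β t) t := by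
    intro t ht
    rw [hfe]
    exact hasDerivAt_f0 r α hβ0 hβ1 ht
  have hderiv1 : ∀ t : ℝ, t < 1 → deriv f₀ t = f1fun r β t := fun t ht => (hd0 t ht).deriv
  have hev : ∀ t : ℝ, t < 1 → deriv f₀ =ᶠ[nhds t] f1fun r β := by
    intro t ht
    filter_upwards [Iio_mem_nhds ht] with s hs
    exact hderiv1 s hs
  have hderiv2 : ∀ t : ℝ, t < 1 → deriv (deriv f₀) t =
      -(β * (1 - β) * r ^ 2 * Efun r t * Real.log 2) /
        ((1 - t) ^ 3 * (β * Efun r t + 1 - β) ^ 2) := by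
    intro t ht
    rw [(hev t ht).deriv_eq]
    exact (hasDerivAt_f1 r hβ0 hβ1 ht).deriv
  have hnonpos : ∀ t : ℝ, t < 1 → deriv (deriv f₀) t ≤ 0 := by
    intro t ht
    rw [hderiv2 t ht, neg_div]
    apply neg_nonpos.mpr
    apply div_nonneg
    · have hE := (Efun_pos r t).le
      have hl := (Real.log_pos one_lt_two).le
      have h1β : (0:ℝ) ≤ 1 - β := by linarith
      positivity
    · have hg := (gfun_pos r hβ0 hβ1 t)
      have h1t : (0:ℝ) ≤ 1 - t := by linarith
      have : (0:ℝ) < β * Efun r t + 1 - β := hg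
      positivity
  constructor
  · intro t ht
    exact ⟨hderiv2 t ht.2, hnonpos t ht.2⟩
  · apply concaveOn_of_deriv2_nonpos (convex_Ico 0 1)
    · intro t ht
      exact ((hd0 t ht.2).differentiableAt).continuousAt.continuousWithinAt
    · rw [interior_Ico]
      intro t ht
      exact ((hd0 t ht.2).differentiableAt).differentiableWithinAt
    · rw [interior_Ico]
      intro t ht
      have : DifferentiableAt ℝ (deriv f₀) t :=
        (hasDerivAt_f1 r hβ0 hβ1 ht.2).differentiableAt.congr_of_eventuallyEq (hev t ht.2)
      exact this.differentiableWithinAt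
    · rw [interior_Ico]
      intro t ht
      have h2 : deriv^[2] f₀ t = deriv (deriv f₀) t := rfl
      rw [h2]
      exact hnonpos t ht.2
end

section
/- For constants r > 0, ζ > 0, K > 0: if 0 < ζ < 1 then the function g₀(x) = (K/(x − ζ))·(2^{rx} − 1) + 1 is convex on the interval [1, 1 + ζ); if ζ ≥ 1 then g₀ is convex on (ζ, 1 + ζ). -/
open Real Set

lemma exp_quad_aux (u : ℝ) (hu : 0 ≤ u) : 2 ≤ Real.exp u * (u ^ 2 - 2 * u + 2) := by
  have h := Real.quadratic_le_exp_of_nonneg hu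
  have hq : 0 ≤ u ^ 2 - 2 * u + 2 := by nlinarith [sq_nonneg (u - 1)]
  nlinarith [sq_nonneg u, sq_nonneg (u - 1), sq_nonneg (u ^ 2)]

theorem stmt_3 (r ζ K : ℝ) (hr : 0 < r) (hζ : 0 < ζ) (hK : 0 < K)
    (g₀ : ℝ → ℝ)
    (hg : ∀ x : ℝ, g₀ x = K / (x - ζ) * ((2:ℝ) ^ (r * x) - 1) + 1) :
    (ζ < 1 → ConvexOn ℝ (Set.Ico (1:ℝ) (1 + ζ)) g₀) ∧
    (1 ≤ ζ → ConvexOn ℝ (Set.Ioo ζ (1 + ζ)) g₀) := by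
  set a : ℝ := r * Real.log 2 with ha
  have ha0 : 0 < a := mul_pos hr (Real.log_pos (by norm_num))
  have hgE : ∀ x : ℝ, g₀ x = K * (Real.exp (a * x) - 1) / (x - ζ) + 1 := by
    intro x
    rw [hg x, Real.rpow_def_of_pos (by norm_num : (0:ℝ) < 2)]
    rw [div_mul_eq_mul_div]
    rw [ha]
    ring_nf
  have hgfun : g₀ = fun x => K * (Real.exp (a * x) - 1) / (x - ζ) + 1 := funext hgE
  -- explicit derivatives
  set f' : ℝ → ℝ := fun x =>
    (K * (Real.exp (a * x) * a) * (x - ζ) - K * (Real.exp (a * x) - 1) * 1) / (x - ζ) ^ 2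
    with hf'def
  set f'' : ℝ → ℝ := fun x =>
    K * (Real.exp (a * x) * (a ^ 2 * (x - ζ) ^ 2 - 2 * a * (x - ζ) + 2) - 2) / (x - ζ) ^ 3
    with hf''def
  have hexp : ∀ x : ℝ, HasDerivAt (fun x => Real.exp (a * x)) (Real.exp (a * x) * a) x := by
    intro x
    have h1 : HasDerivAt (fun x : ℝ => a * x) a x := by
      simpa using (hasDerivAt_id x).const_mul a
    exact (Real.hasDerivAt_exp (a * x)).comp x h1
  have hd1 : ∀ x : ℝ, x ≠ ζ → HasDerivAt g₀ (f' x) x := by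
    intro x hx
    have hden : x - ζ ≠ 0 := sub_ne_zero.mpr hx
    rw [hgfun]
    have hnum : HasDerivAt (fun x => K * (Real.exp (a * x) - 1))
        (K * (Real.exp (a * x) * a)) x := (((hexp x).sub_const 1).const_mul K)
    have hden' : HasDerivAt (fun x : ℝ => x - ζ) 1 x := (hasDerivAt_id x).sub_const ζ
    exact (hnum.div hden' hden).add_const 1
  have hd2 : ∀ x : ℝ, x ≠ ζ → HasDerivAt f' (f'' x) x := by
    intro x hx
    have hden : x - ζ ≠ 0 := sub_ne_zero.mpr hx
    have hp : HasDerivAt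
        (fun x => K * (Real.exp (a * x) * a) * (x - ζ) - K * (Real.exp (a * x) - 1) * 1)
        ((K * (Real.exp (a * x) * a * a)) * (x - ζ) + K * (Real.exp (a * x) * a) * 1
          - K * (Real.exp (a * x) * a) * 1) x := by
      have h1 : HasDerivAt (fun x => K * (Real.exp (a * x) * a))
          (K * (Real.exp (a * x) * a * a)) x := by
        simpa [mul_assoc] using ((hexp x).mul_const a).const_mul K
      have h2 : HasDerivAt (fun x : ℝ => x - ζ) 1 x := (hasDerivAt_id x).sub_const ζ
      have h3 : HasDerivAt (fun x => K * (Real.exp (a * x) - 1) * 1)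
          (K * (Real.exp (a * x) * a) * 1) x := (((hexp x).sub_const 1).const_mul K).mul_const 1
      exact (h1.mul h2).sub h3
    have hq : HasDerivAt (fun x : ℝ => (x - ζ) ^ 2) (2 * (x - ζ)) x := by
      have h2 : HasDerivAt (fun x : ℝ => x - ζ) 1 x := (hasDerivAt_id x).sub_const ζ
      simpa using h2.fun_pow 2
    have := hp.fun_div hq (pow_ne_zero 2 hden)
    refine this.congr_deriv ?_
    rw [hf''def]
    field_simp
    ring
  -- convexity on Ioi ζ
  have hmain : ConvexOn ℝ (Set.Ioi ζ) g₀ := by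
    have hint : interior (Set.Ioi ζ) = Set.Ioi ζ := interior_Ioi
    apply convexOn_of_hasDerivWithinAt2_nonneg (convex_Ioi ζ)
      (f' := f') (f'' := f'')
    · intro x hx
      exact ((hd1 x (ne_of_gt hx)).continuousAt).continuousWithinAt
    · intro x hx
      rw [hint] at hx ⊢
      exact (hd1 x (ne_of_gt hx)).hasDerivWithinAt
    · intro x hx
      rw [hint] at hx ⊢
      exact (hd2 x (ne_of_gt hx)).hasDerivWithinAt
    · intro x hx
      rw [hint] at hx
      have ht : 0 < x - ζ := sub_pos.mpr hx
      rw [hf''def]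
      apply div_nonneg _ (le_of_lt (by positivity))
      have hq0 : 0 ≤ a ^ 2 * (x - ζ) ^ 2 - 2 * a * (x - ζ) + 2 := by
        nlinarith [sq_nonneg (a * (x - ζ) - 1)]
      have hkey : 2 ≤ Real.exp (a * (x - ζ)) *
          ((a * (x - ζ)) ^ 2 - 2 * (a * (x - ζ)) + 2) :=
        exp_quad_aux _ (by positivity)
      have hE : Real.exp (a * (x - ζ)) ≤ Real.exp (a * x) := by
        apply Real.exp_le_exp.mpr
        nlinarith
      nlinarith [mul_le_mul_of_nonneg_right hE hq0, Real.exp_pos (a * (x - ζ))]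
  refine ⟨fun h1 => ?_, fun h1 => ?_⟩
  · exact hmain.subset (fun x hx => lt_of_lt_of_le h1 hx.1) (convex_Ico _ _)
  · exact hmain.subset (fun x hx => hx.1) (convex_Ioo _ _)
end

section
/- For r > 0 and ζ > 0, the function g₅(x) = (2^{rx} − 1)² − (x − ζ)²·2^{rx}·(r·ln 2)² is strictly increasing on (ζ, ∞), and g₅(x) > g₅(ζ) = (2^{rζ} − 1)² > 0 for all x > ζ. -/
open Real Set

theorem stmt_8 (r ζ : ℝ) (hr : 0 < r) (hζ : 0 < ζ)
    (g₅ : ℝ → ℝ)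
    (hg : ∀ x : ℝ, g₅ x =
      ((2:ℝ) ^ (r * x) - 1) ^ 2 - (x - ζ) ^ 2 * (2:ℝ) ^ (r * x) * (r * Real.log 2) ^ 2) :
    StrictMonoOn g₅ (Set.Ioi ζ) ∧
    g₅ ζ = ((2:ℝ) ^ (r * ζ) - 1) ^ 2 ∧
    0 < g₅ ζ ∧
    ∀ x : ℝ, ζ < x → g₅ ζ < g₅ x := by
  set c := r * Real.log 2 with hc
  have hc0 : 0 < c := mul_pos hr (Real.log_pos one_lt_two)
  have h2 : ∀ x : ℝ, (2:ℝ) ^ (r * x) = Real.exp (c * x) := by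
    intro x
    rw [Real.rpow_def_of_pos two_pos]
    rw [hc]; ring_nf
  set f : ℝ → ℝ := fun x => (Real.exp (c * x) - 1) ^ 2
      - (x - ζ) ^ 2 * Real.exp (c * x) * c ^ 2 with hf
  have hgf : ∀ x, g₅ x = f x := by
    intro x; rw [hg x, h2 x]
  set d : ℝ → ℝ := fun x => 2 * (Real.exp (c * x) - 1) * (c * Real.exp (c * x))
      - (2 * (x - ζ) * Real.exp (c * x) + (x - ζ) ^ 2 * (c * Real.exp (c * x))) * c ^ 2
    with hd
  have hder : ∀ x : ℝ, HasDerivAt f (d x) x := by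
    intro x
    have h1 : HasDerivAt (fun x : ℝ => Real.exp (c * x)) (c * Real.exp (c * x)) x := by
      have h := ((hasDerivAt_id x).const_mul c).exp
      simp only [id_eq] at h
      convert h using 1
      ring
    have h2' : HasDerivAt (fun x : ℝ => (Real.exp (c * x) - 1) ^ 2)
        (2 * (Real.exp (c * x) - 1) * (c * Real.exp (c * x))) x := by
      have := ((h1.sub_const 1).fun_pow 2)
      simpa [mul_assoc, mul_comm, mul_left_comm] using this
    have h3 : HasDerivAt (fun x : ℝ => (x - ζ) ^ 2) (2 * (x - ζ)) x := by
      have := ((hasDerivAt_id x).sub_const ζ).fun_pow 2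
      simpa using this
    have h4 : HasDerivAt (fun x : ℝ => (x - ζ) ^ 2 * Real.exp (c * x))
        (2 * (x - ζ) * Real.exp (c * x) + (x - ζ) ^ 2 * (c * Real.exp (c * x))) x :=
      h3.mul h1
    have h5 := h2'.sub (h4.mul_const (c ^ 2))
    exact h5
  have hderpos : ∀ x : ℝ, ζ < x → 0 < d x := by
    intro x hx
    have hu0 : 0 < x - ζ := by linarith
    set t := c * (x - ζ) with ht
    have ht0 : 0 < t := mul_pos hc0 hu0
    have hsum : 1 + t + t ^ 2 / 2 ≤ Real.exp t := by
      have := Real.sum_le_exp_of_nonneg ht0.le 3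
      simp [Finset.sum_range_succ] at this
      nlinarith [this]
    have hsplit : Real.exp (c * x) = Real.exp (c * ζ) * Real.exp t := by
      rw [← Real.exp_add, ht]; ring_nf
    have hcz : 1 < Real.exp (c * ζ) := by
      have h := Real.add_one_le_exp (c * ζ)
      nlinarith [mul_pos hc0 hζ]
    have hE : 1 + t + t ^ 2 / 2 < Real.exp (c * x) := by
      nlinarith [Real.exp_pos t]
    have hg6 : 0 < 2 * (Real.exp (c * x) - 1) - 2 * t - t ^ 2 := by nlinarith
    have heq : d x = c * Real.exp (c * x) *
        (2 * (Real.exp (c * x) - 1) - 2 * t - t ^ 2) := by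
      simp only [hd, ht]; ring
    rw [heq]
    have := Real.exp_pos (c * x)
    positivity
  have hmono : StrictMonoOn f (Set.Ici ζ) := by
    apply strictMonoOn_of_deriv_pos (convex_Ici ζ)
    · apply Continuous.continuousOn
      fun_prop
    · intro x hx
      rw [interior_Ici] at hx
      rw [(hder x).deriv]
      exact hderpos x hx
  have hval : g₅ ζ = ((2:ℝ) ^ (r * ζ) - 1) ^ 2 := by
    rw [hg ζ]; simp
  have hpos : 0 < g₅ ζ := by
    rw [hval]
    have h1 : 1 < (2:ℝ) ^ (r * ζ) := by
      rw [h2 ζ]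
      have h := Real.add_one_le_exp (c * ζ)
      nlinarith [mul_pos hc0 hζ]
    nlinarith
  refine ⟨?_, hval, hpos, ?_⟩
  · intro a ha b hb hab
    rw [hgf a, hgf b]
    exact hmono (Set.mem_Ici.mpr (le_of_lt ha)) (Set.mem_Ici.mpr (le_of_lt hb)) hab
  · intro x hx
    rw [hgf x, hgf ζ]
    exact hmono (le_refl ζ) (le_of_lt hx) hx
end

section
/- Consider maximizing f₀(t) = α − (1 − t)·log₂(β·2^{r/(1−t)} + 1 − β) over t ∈ [t_min, t_max] where t_min = P_SIC/(ξ|h₁|²P_max + P_SIC) and t_max = 1 − r/log₂(1 + |h₁|²P_max/σ²), with α = log₂(1 + |h₂|²P_max/σ²) and β = |h₂|²/|h₁|². If the interval [t_min, t_max] is nonempty (0 < β < 1, r > 0), then the maximum is attained at t = t_min and equals α − (ξ|h₁|²P_max/(ξ|h₁|²P_max + P_SIC))·log₂(β·(2^{r(ξ|h₁|²P_max + P_SIC)/(ξ|h₁|²P_max)} − 1) + 1). -/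
open Real Set

lemma key_mono (β r s s₁ : ℝ) (hβ0 : 0 < β) (hβ1 : β < 1) (hr : 0 < r)
    (hs : 0 < s) (hss : s ≤ s₁) :
    s₁ * Real.logb 2 (β * (2:ℝ) ^ (r / s₁) + 1 - β) ≤
    s * Real.logb 2 (β * (2:ℝ) ^ (r / s) + 1 - β) := by
  have hs₁ : 0 < s₁ := lt_of_lt_of_le hs hss
  set a := r / s₁ with ha_def
  set b := r / s with hb_def
  have ha : 0 < a := div_pos hr hs₁
  have hb : 0 < b := div_pos hr hs
  have hab : a ≤ b := by rw [ha_def, hb_def]; gcongr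
  have hp : 1 ≤ b / a := (one_le_div ha).2 hab
  have hx : (0:ℝ) < (2:ℝ) ^ a := rpow_pos_of_pos two_pos a
  have hconv := (convexOn_rpow hp).2
    (Set.mem_Ici.2 hx.le) (Set.mem_Ici.2 (zero_le_one)) hβ0.le
    (by linarith : (0:ℝ) ≤ 1 - β) (by ring)
  simp only [smul_eq_mul, mul_one] at hconv
  have h2b : ((2:ℝ) ^ a) ^ (b / a) = (2:ℝ) ^ b := by
    rw [← Real.rpow_mul (by norm_num : (0:ℝ) ≤ 2)]
    congr 1
    field_simp
  have hone : (1:ℝ) ^ (b / a) = 1 := Real.one_rpow _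
  rw [h2b, hone, mul_one] at hconv
  have hA : (0:ℝ) < β * (2:ℝ) ^ a + 1 - β := by
    have : 0 < β * (2:ℝ) ^ a := mul_pos hβ0 hx
    linarith
  have hB : (0:ℝ) < β * (2:ℝ) ^ b + 1 - β := by
    have : 0 < β * (2:ℝ) ^ b := mul_pos hβ0 (rpow_pos_of_pos two_pos b)
    linarith
  have hconv' : (β * (2:ℝ) ^ a + 1 - β) ^ (b / a) ≤ β * (2:ℝ) ^ b + 1 - β := by
    calc (β * (2:ℝ) ^ a + 1 - β) ^ (b / a)
        = (β * (2:ℝ) ^ a + (1 - β)) ^ (b / a) := by ring_nf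
      _ ≤ β * (2:ℝ) ^ b + (1 - β) := hconv
      _ = β * (2:ℝ) ^ b + 1 - β := by ring
  have hlog : (b / a) * Real.logb 2 (β * (2:ℝ) ^ a + 1 - β) ≤
      Real.logb 2 (β * (2:ℝ) ^ b + 1 - β) := by
    rw [← Real.logb_rpow_eq_mul_logb_of_pos hA]
    exact Real.logb_le_logb_of_le one_lt_two (rpow_pos_of_pos hA _) hconv'
  -- multiply through
  have hkey : b * Real.logb 2 (β * (2:ℝ) ^ a + 1 - β) ≤
      a * Real.logb 2 (β * (2:ℝ) ^ b + 1 - β) := by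
    have := mul_le_mul_of_nonneg_left hlog ha.le
    calc b * Real.logb 2 (β * (2:ℝ) ^ a + 1 - β)
        = a * ((b / a) * Real.logb 2 (β * (2:ℝ) ^ a + 1 - β)) := by
          field_simp
      _ ≤ a * Real.logb 2 (β * (2:ℝ) ^ b + 1 - β) := this
  -- now convert: s₁ = r / a, s = r / b
  have hs₁a : s₁ = r / a := by rw [ha_def]; field_simp
  have hsb : s = r / b := by rw [hb_def]; field_simp
  rw [hs₁a, hsb]
  rw [div_mul_eq_mul_div, div_mul_eq_mul_div, div_le_div_iff₀ ha hb]
  nlinarith [mul_le_mul_of_nonneg_left hkey hr.le]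


theorem stmt_12 (h1 h2 Pmax σ2 ξ PSIC r : ℝ)
    (hh1 : 0 < h1) (hh2 : 0 < h2) (hP : 0 < Pmax) (hσ : 0 < σ2) (hξ : 0 < ξ)
    (hS : 0 < PSIC) (h12 : h2 < h1) (hr : 0 < r)
    (α β tmin tmax : ℝ)
    (hα : α = Real.logb 2 (1 + h2 * Pmax / σ2))
    (hβ : β = h2 / h1)
    (htmin : tmin = PSIC / (ξ * h1 * Pmax + PSIC))
    (htmax : tmax = 1 - r / Real.logb 2 (1 + h1 * Pmax / σ2))
    (f₀ : ℝ → ℝ)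
    (hf : ∀ t : ℝ, f₀ t =
      α - (1 - t) * Real.logb 2 (β * (2:ℝ) ^ (r / (1 - t)) + 1 - β))
    (hne : tmin ≤ tmax) :
    IsMaxOn f₀ (Set.Icc tmin tmax) tmin ∧
    f₀ tmin =
      α - ξ * h1 * Pmax / (ξ * h1 * Pmax + PSIC) *
        Real.logb 2
          (β * ((2:ℝ) ^ (r * (ξ * h1 * Pmax + PSIC) / (ξ * h1 * Pmax)) - 1) + 1) := by
  have hβ0 : 0 < β := hβ ▸ div_pos hh2 hh1
  have hβ1 : β < 1 := hβ ▸ (div_lt_one hh1).2 h12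
  have hA : 0 < ξ * h1 * Pmax := by positivity
  have hAP : 0 < ξ * h1 * Pmax + PSIC := by positivity
  have hL : 0 < Real.logb 2 (1 + h1 * Pmax / σ2) := by
    apply Real.logb_pos one_lt_two
    have : 0 < h1 * Pmax / σ2 := by positivity
    linarith
  have htmax1 : tmax < 1 := by
    rw [htmax]
    have : 0 < r / Real.logb 2 (1 + h1 * Pmax / σ2) := div_pos hr hL
    linarith
  have h1tmin : 1 - tmin = ξ * h1 * Pmax / (ξ * h1 * Pmax + PSIC) := by
    rw [htmin]; field_simp; ring
  have h1tminpos : 0 < 1 - tmin := by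
    rw [h1tmin]; positivity
  constructor
  · intro t ht
    simp only [Set.mem_Icc] at ht
    simp only [Set.mem_setOf_eq, hf]
    have hst : 0 < 1 - t := by linarith [ht.2]
    have hss : 1 - t ≤ 1 - tmin := by linarith [ht.1]
    have := key_mono β r (1 - t) (1 - tmin) hβ0 hβ1 hr hst hss
    linarith
  · rw [hf, h1tmin]
    have hexp : r / (ξ * h1 * Pmax / (ξ * h1 * Pmax + PSIC)) =
        r * (ξ * h1 * Pmax + PSIC) / (ξ * h1 * Pmax) := by
      field_simp
    rw [hexp]
    have harg : β * (2:ℝ) ^ (r * (ξ * h1 * Pmax + PSIC) / (ξ * h1 * Pmax)) + 1 - β =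
        β * ((2:ℝ) ^ (r * (ξ * h1 * Pmax + PSIC) / (ξ * h1 * Pmax)) - 1) + 1 := by ring
    rw [harg]
end

section
/- With the notation of the time-switching optimum, the optimal rate R₂* = α − (1 − t_min)·log₂(β·2^{r/(1−t_min)} + 1 − β) with t_min = P_SIC/(ξ|h₁|²P_max + P_SIC), α = log₂(1 + |h₂|²P_max/σ²), 0 < β = |h₂|²/|h₁|² < 1, satisfies t_min·α ≤ R₂* ≤ α for every r in the feasible range 0 ≤ r ≤ (1 − t_min)·log₂(1 + |h₁|²P_max/σ²). -/
open Real Set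

theorem stmt_13 (h1 h2 Pmax σ2 ξ PSIC r : ℝ)
    (hh1 : 0 < h1) (hh2 : 0 < h2) (hP : 0 < Pmax) (hσ : 0 < σ2) (hξ : 0 < ξ)
    (hS : 0 < PSIC) (h12 : h2 < h1)
    (α β tmin : ℝ)
    (hα : α = Real.logb 2 (1 + h2 * Pmax / σ2))
    (hβ : β = h2 / h1)
    (htmin : tmin = PSIC / (ξ * h1 * Pmax + PSIC))
    (hr0 : 0 ≤ r)
    (hr1 : r ≤ (1 - tmin) * Real.logb 2 (1 + h1 * Pmax / σ2))
    (R₂ : ℝ)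
    (hR : R₂ = α - (1 - tmin) * Real.logb 2 (β * (2:ℝ) ^ (r / (1 - tmin)) + 1 - β)) :
    tmin * α ≤ R₂ ∧ R₂ ≤ α := by
  have hden : 0 < ξ * h1 * Pmax + PSIC := by positivity
  have ht0 : 0 < tmin := by rw [htmin]; positivity
  have ht1 : tmin < 1 := by
    rw [htmin, div_lt_one hden]
    have : 0 < ξ * h1 * Pmax := by positivity
    linarith
  have h1t : 0 < 1 - tmin := by linarith
  have hβ0 : 0 < β := by rw [hβ]; positivity
  have hβ1 : β < 1 := by rw [hβ, div_lt_one hh1]; exact h12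
  set s := r / (1 - tmin) with hs
  have hs0 : 0 ≤ s := div_nonneg hr0 h1t.le
  have h2s1 : (1:ℝ) ≤ (2:ℝ) ^ s := by
    have := Real.rpow_le_rpow_of_exponent_le one_le_two hs0
    simpa using this
  have hX : 0 < 1 + h1 * Pmax / σ2 := by positivity
  have hsle : s ≤ Real.logb 2 (1 + h1 * Pmax / σ2) := by
    rw [hs, div_le_iff₀ h1t, mul_comm]; exact hr1
  have h2sX : (2:ℝ) ^ s ≤ 1 + h1 * Pmax / σ2 := by
    calc (2:ℝ) ^ s ≤ (2:ℝ) ^ Real.logb 2 (1 + h1 * Pmax / σ2) :=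
          Real.rpow_le_rpow_of_exponent_le one_le_two hsle
      _ = 1 + h1 * Pmax / σ2 := Real.rpow_logb two_pos (by norm_num) hX
  have hA1 : (1:ℝ) ≤ β * (2:ℝ) ^ s + 1 - β := by nlinarith
  have hL0 : 0 ≤ Real.logb 2 (β * (2:ℝ) ^ s + 1 - β) :=
    Real.logb_nonneg (by norm_num) hA1
  have hbh : β * h1 = h2 := by rw [hβ]; field_simp
  have hAB : β * (2:ℝ) ^ s + 1 - β ≤ 1 + h2 * Pmax / σ2 := by
    have h1' : β * (2:ℝ) ^ s ≤ β * (1 + h1 * Pmax / σ2) :=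
      mul_le_mul_of_nonneg_left h2sX hβ0.le
    have : β * (1 + h1 * Pmax / σ2) = β + h2 * Pmax / σ2 := by
      field_simp; nlinarith
    linarith [this ▸ h1']
  have hLα : Real.logb 2 (β * (2:ℝ) ^ s + 1 - β) ≤ α := by
    rw [hα]
    exact Real.logb_le_logb_of_le (by norm_num) (by linarith) hAB
  constructor
  · rw [hR]
    nlinarith [mul_le_mul_of_nonneg_left hLα h1t.le]
  · rw [hR]; nlinarith
end

section
/- Assume ξ|h₁|²P_max > P_SIC and |h₂|² > |h₁|² − P_SIC/(ξP_max), all constants positive, r ≥ 0 within the feasible range. Then the optimal value of the power-splitting problem is R₂* = log₂(1 + (ξ|h₁|²P_max − P_SIC)/(ξσ²)) − r, i.e., R₂* + r is constant; in particular the boundary of the rate region is a straight line of slope −1. -/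
open Real Set

set_option maxHeartbeats 1000000 in
theorem stmt_15 (h1 h2 Pmax σ2 ξ PSIC r : ℝ)
    (hh1 : 0 < h1) (hh2 : 0 < h2) (hP : 0 < Pmax) (hσ : 0 < σ2) (hξ : 0 < ξ)
    (hS : 0 < PSIC)
    (hfeas : PSIC < ξ * h1 * Pmax)
    (hch : h1 - PSIC / (ξ * Pmax) < h2)
    (hr0 : 0 ≤ r)
    (hr1 : r ≤ Real.logb 2 (1 + (ξ * h1 * Pmax - PSIC) / (ξ * σ2))) :
    IsGreatest
      {v : ℝ | ∃ ρ P₁ : ℝ,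
        PSIC / (ξ * h1 * Pmax) ≤ ρ ∧ ρ < 1 ∧ 0 ≤ P₁ ∧ P₁ ≤ Pmax ∧
        Real.logb 2 (1 + h1 * (1 - ρ) * P₁ / σ2) = r ∧
        v = min (Real.logb 2 ((h2 * Pmax + σ2) / (h2 * P₁ + σ2)))
                (Real.logb 2 ((h1 * (1 - ρ) * Pmax + σ2) / (h1 * (1 - ρ) * P₁ + σ2)))}
      (Real.logb 2 (1 + (ξ * h1 * Pmax - PSIC) / (ξ * σ2)) - r) := by
  have hb2 : (1:ℝ) < 2 := one_lt_two
  have hξP : 0 < ξ * Pmax := mul_pos hξ hP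
  have hξhP : 0 < ξ * h1 * Pmax := by positivity
  set a : ℝ := h1 - PSIC / (ξ * Pmax) with ha_def
  have ha : 0 < a := by
    have : PSIC / (ξ * Pmax) < h1 := by
      rw [div_lt_iff₀ hξP]; nlinarith
    simp only [ha_def]; linarith
  have hha : h2 > a := hch
  have hkey : (ξ * h1 * Pmax - PSIC) / (ξ * σ2) = a * Pmax / σ2 := by
    simp only [ha_def]; field_simp
  set E : ℝ := (2:ℝ) ^ r with hE_def
  have hEpos : 0 < E := Real.rpow_pos_of_pos two_pos r
  have hE1 : 1 ≤ E := by
    have := Real.rpow_le_rpow_of_exponent_le hb2.le hr0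
    simpa using this
  have hXpos : 0 < 1 + a * Pmax / σ2 := by positivity
  have hEmax : E ≤ 1 + a * Pmax / σ2 := by
    rw [hkey] at hr1
    have := Real.rpow_le_rpow_of_exponent_le hb2.le hr1
    rwa [Real.rpow_logb two_pos (by norm_num) hXpos] at this
  have hEmax' : σ2 * (E - 1) ≤ a * Pmax := by
    have := (le_div_iff₀ hσ).mp (by linarith : E - 1 ≤ a * Pmax / σ2)
    linarith
  rw [hkey]
  constructor
  · -- membership
    refine ⟨PSIC / (ξ * h1 * Pmax), σ2 * (E - 1) / a, le_refl _, ?_, ?_, ?_, ?_, ?_⟩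
    · rw [div_lt_one hξhP]; linarith
    · have hE1' : (0:ℝ) ≤ E - 1 := by linarith
      positivity
    · rw [div_le_iff₀ ha]
      linarith
    · have haρ : h1 * (1 - PSIC / (ξ * h1 * Pmax)) = a := by
        simp only [ha_def]; field_simp
      rw [haρ]
      have : a * (σ2 * (E - 1) / a) = σ2 * (E - 1) := by field_simp
      rw [this]
      have : 1 + σ2 * (E - 1) / σ2 = E := by field_simp; ring
      rw [this, hE_def, Real.logb_rpow two_pos (by norm_num)]
    · have haρ : h1 * (1 - PSIC / (ξ * h1 * Pmax)) = a := by
        simp only [ha_def]; field_simp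
      rw [haρ]
      have hP₁ : a * (σ2 * (E - 1) / a) + σ2 = σ2 * E := by field_simp; ring
      rw [hP₁]
      have hP₁le : σ2 * (E - 1) / a ≤ Pmax := by
        rw [div_le_iff₀ ha]; nlinarith
      have hq : (a * Pmax + σ2) / (σ2 * E) = (1 + a * Pmax / σ2) / E := by
        field_simp; ring
      have hsecond : Real.logb 2 ((a * Pmax + σ2) / (σ2 * E))
          = Real.logb 2 (1 + a * Pmax / σ2) - r := by
        rw [hq, Real.logb_div (by positivity) hEpos.ne', hE_def,
          Real.logb_rpow two_pos (by norm_num)]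
      rw [hsecond]
      set Q : ℝ := σ2 * (E - 1) / a with hQ_def
      have hQ : 0 ≤ Q := by
        have hE1' : (0:ℝ) ≤ E - 1 := by linarith
        rw [hQ_def]; positivity
      have hQE : a * Q + σ2 = σ2 * E := by
        rw [hQ_def]; field_simp; ring
      have hfirst : Real.logb 2 ((a * Pmax + σ2) / (σ2 * E))
          ≤ Real.logb 2 ((h2 * Pmax + σ2) / (h2 * Q + σ2)) := by
        rw [← hQE]
        apply Real.logb_le_logb_of_le hb2
          (div_pos (by positivity) (by nlinarith))
        rw [div_le_div_iff₀ (by nlinarith) (by nlinarith)]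
        nlinarith [mul_nonneg (mul_nonneg hσ.le (sub_nonneg.mpr hha.le))
          (sub_nonneg.mpr hP₁le)]
      rw [hsecond] at hfirst
      rw [min_eq_right hfirst]
  · -- upper bound
    rintro v ⟨ρ, P₁, hρ1, hρ2, hP₁0, hP₁max, hcon, hveq⟩
    set b : ℝ := h1 * (1 - ρ) with hb_def
    have hbpos : 0 < b := by
      have : 0 < 1 - ρ := by linarith
      positivity
    have hba : b ≤ a := by
      have h' : PSIC ≤ ρ * (ξ * h1 * Pmax) := (div_le_iff₀ hξhP).mp hρ1
      have h'' : PSIC / (ξ * Pmax) ≤ h1 * ρ := by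
        rw [div_le_iff₀ hξP]; nlinarith
      simp only [hb_def, ha_def]; nlinarith
    have hYpos : 0 < 1 + b * P₁ / σ2 := by positivity
    have hYE : 1 + b * P₁ / σ2 = E := by
      have := Real.rpow_logb two_pos (by norm_num) hYpos
      rw [hcon] at this
      rw [← this, hE_def]
    have hbP₁ : b * P₁ = σ2 * (E - 1) := by
      have h' : b * P₁ / σ2 = E - 1 := by linarith
      have := (div_eq_iff hσ.ne').mp h'
      linarith
    have hden : b * P₁ + σ2 = σ2 * E := by linarith
    have hsecond : Real.logb 2 ((b * Pmax + σ2) / (b * P₁ + σ2))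
        ≤ Real.logb 2 (1 + a * Pmax / σ2) - r := by
      rw [hden]
      have hle : Real.logb 2 ((b * Pmax + σ2) / (σ2 * E))
          ≤ Real.logb 2 ((a * Pmax + σ2) / (σ2 * E)) := by
        apply Real.logb_le_logb_of_le hb2 (by positivity)
        apply div_le_div_of_nonneg_right _ (by positivity)
        · nlinarith
      have hq : (a * Pmax + σ2) / (σ2 * E) = (1 + a * Pmax / σ2) / E := by
        field_simp; ring
      rw [hq, Real.logb_div (by positivity) hEpos.ne', hE_def,
        Real.logb_rpow two_pos (by norm_num)] at hle
      exact hle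
    calc v ≤ Real.logb 2 ((b * Pmax + σ2) / (b * P₁ + σ2)) := by
            rw [hveq]; exact min_le_right _ _
      _ ≤ Real.logb 2 (1 + a * Pmax / σ2) - r := hsecond
end

section
/- Assume ξ|h₁|²P_max > P_SIC and |h₂|² ≤ |h₁|² − P_SIC/(ξP_max). Then the optimal value of the power-splitting problem equals log₂(((|h₂|²P_max + σ²)·(ξ|h₁|²P_max − P_SIC)) / ((ξP_max·(|h₂|²(2^r − 1) + |h₁|²) − P_SIC)·σ²)), attained at ρ = P_SIC/(ξ|h₁|²P_max) and P₁ = ξP_max(2^r − 1)σ²/(ξ|h₁|²P_max − P_SIC). -/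
open Real Set

set_option maxHeartbeats 1000000 in
theorem stmt_16 (h1 h2 Pmax σ2 ξ PSIC r : ℝ)
    (hh1 : 0 < h1) (hh2 : 0 < h2) (hP : 0 < Pmax) (hσ : 0 < σ2) (hξ : 0 < ξ)
    (hS : 0 < PSIC)
    (hfeas : PSIC < ξ * h1 * Pmax)
    (hch : h2 ≤ h1 - PSIC / (ξ * Pmax))
    (hr0 : 0 ≤ r)
    (hr1 : r ≤ Real.logb 2 (1 + (ξ * h1 * Pmax - PSIC) / (ξ * σ2)))
    (obj : ℝ → ℝ → ℝ)
    (hobj : ∀ ρ P₁ : ℝ, obj ρ P₁ =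
      min (Real.logb 2 ((h2 * Pmax + σ2) / (h2 * P₁ + σ2)))
          (Real.logb 2 ((h1 * (1 - ρ) * Pmax + σ2) / (h1 * (1 - ρ) * P₁ + σ2))))
    (ρ₀ P₁₀ v : ℝ)
    (hρ₀ : ρ₀ = PSIC / (ξ * h1 * Pmax))
    (hP₁₀ : P₁₀ = ξ * Pmax * ((2:ℝ) ^ r - 1) * σ2 / (ξ * h1 * Pmax - PSIC))
    (hv : v = Real.logb 2 ((h2 * Pmax + σ2) * (ξ * h1 * Pmax - PSIC) /
        ((ξ * Pmax * (h2 * ((2:ℝ) ^ r - 1) + h1) - PSIC) * σ2))) :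
    IsGreatest
      {w : ℝ | ∃ ρ P₁ : ℝ,
        PSIC / (ξ * h1 * Pmax) ≤ ρ ∧ ρ < 1 ∧ 0 ≤ P₁ ∧ P₁ ≤ Pmax ∧
        Real.logb 2 (1 + h1 * (1 - ρ) * P₁ / σ2) = r ∧ w = obj ρ P₁} v ∧
    Real.logb 2 (1 + h1 * (1 - ρ₀) * P₁₀ / σ2) = r ∧
    obj ρ₀ P₁₀ = v := by
  have hb1 : (1:ℝ) < 2 := one_lt_two
  have hA : (0:ℝ) < ξ * h1 * Pmax - PSIC := by linarith
  have h2r : (1:ℝ) ≤ (2:ℝ) ^ r := Real.one_le_rpow (le_of_lt hb1) hr0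
  -- g₀ = h1 * (1 - ρ₀)
  have hg0 : h1 * (1 - ρ₀) = (ξ * h1 * Pmax - PSIC) / (ξ * Pmax) := by
    rw [hρ₀]; field_simp
  have hg0pos : 0 < h1 * (1 - ρ₀) := by
    rw [hg0]; positivity
  -- key product
  have hc : h1 * (1 - ρ₀) * P₁₀ = ((2:ℝ) ^ r - 1) * σ2 := by
    rw [hg0, hP₁₀]; field_simp
  have hP₁₀nn : 0 ≤ P₁₀ := by
    rw [hP₁₀]
    apply div_nonneg _ hA.le
    have : (0:ℝ) ≤ (2:ℝ)^r - 1 := by linarith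
    positivity
  -- constraint at the optimum
  have hcon0 : Real.logb 2 (1 + h1 * (1 - ρ₀) * P₁₀ / σ2) = r := by
    rw [hc]
    have : 1 + ((2:ℝ) ^ r - 1) * σ2 / σ2 = (2:ℝ) ^ r := by
      field_simp
      ring
    rw [this, Real.logb_rpow (by norm_num) (by norm_num)]
  -- 2^r ≤ 1 + A/(ξσ2)
  have hub : (2:ℝ) ^ r ≤ 1 + (ξ * h1 * Pmax - PSIC) / (ξ * σ2) := by
    have h1pos : (0:ℝ) < 1 + (ξ * h1 * Pmax - PSIC) / (ξ * σ2) := by positivity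
    calc (2:ℝ) ^ r ≤ (2:ℝ) ^ Real.logb 2 (1 + (ξ * h1 * Pmax - PSIC) / (ξ * σ2)) := by
          exact Real.rpow_le_rpow_left_iff hb1 |>.2 hr1
      _ = _ := Real.rpow_logb (by norm_num) (by norm_num) h1pos
  have hA' : ((2:ℝ) ^ r - 1) * (ξ * σ2) ≤ ξ * h1 * Pmax - PSIC := by
    have h2' : (2:ℝ) ^ r - 1 ≤ (ξ * h1 * Pmax - PSIC) / (ξ * σ2) := by linarith
    calc ((2:ℝ) ^ r - 1) * (ξ * σ2) ≤ ((ξ * h1 * Pmax - PSIC) / (ξ * σ2)) * (ξ * σ2) :=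
          mul_le_mul_of_nonneg_right h2' (by positivity)
      _ = ξ * h1 * Pmax - PSIC := by field_simp
  -- P₁₀ ≤ Pmax
  have hP₁₀le : P₁₀ ≤ Pmax := by
    rw [hP₁₀, div_le_iff₀ hA]
    nlinarith [mul_le_mul_of_nonneg_left hA' hP.le]
  -- denominator positivity
  have hD : 0 < ξ * Pmax * (h2 * ((2:ℝ) ^ r - 1) + h1) - PSIC := by
    nlinarith [mul_nonneg (mul_nonneg hξ.le hP.le) (mul_nonneg hh2.le (by linarith : (0:ℝ) ≤ (2:ℝ)^r - 1))]
  -- term1 at P₁₀ has argument equal to v's argument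
  have hden0 : 0 < h2 * P₁₀ + σ2 := by positivity
  have harg : (h2 * Pmax + σ2) / (h2 * P₁₀ + σ2) =
      (h2 * Pmax + σ2) * (ξ * h1 * Pmax - PSIC) /
        ((ξ * Pmax * (h2 * ((2:ℝ) ^ r - 1) + h1) - PSIC) * σ2) := by
    rw [div_eq_div_iff hden0.ne' (by positivity : (0:ℝ) < (ξ * Pmax * (h2 * ((2:ℝ) ^ r - 1) + h1) - PSIC) * σ2).ne']
    rw [hP₁₀]
    have e : (ξ * h1 * Pmax - PSIC) * (h2 * (ξ * Pmax * ((2:ℝ) ^ r - 1) * σ2 / (ξ * h1 * Pmax - PSIC))) = h2 * (ξ * Pmax * ((2:ℝ) ^ r - 1) * σ2) := by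
      rw [mul_left_comm, mul_div_cancel₀ _ hA.ne']
    linear_combination (-(h2 * Pmax + σ2)) * e
  have hveq : v = Real.logb 2 ((h2 * Pmax + σ2) / (h2 * P₁₀ + σ2)) := by
    rw [hv, harg]
  -- g₀ ≥ h2
  have hgh2 : h2 ≤ h1 * (1 - ρ₀) := by
    rw [hg0]
    have heq : (ξ * h1 * Pmax - PSIC) / (ξ * Pmax) = h1 - PSIC / (ξ * Pmax) := by
      field_simp
    rw [heq]
    exact hch
  -- v ≤ term2 at the optimum
  have hterm2 : v ≤ Real.logb 2 ((h1 * (1 - ρ₀) * Pmax + σ2) / (h1 * (1 - ρ₀) * P₁₀ + σ2)) := by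
    rw [hveq]
    apply (Real.logb_le_logb hb1 (by positivity) (by positivity)).2
    rw [div_le_div_iff₀ hden0 (by positivity)]
    nlinarith [mul_nonneg hσ.le (mul_nonneg (sub_nonneg.2 hgh2) (sub_nonneg.2 hP₁₀le))]
  have hobjv : obj ρ₀ P₁₀ = v := by
    rw [hobj, hveq]
    exact min_eq_left (hveq ▸ hterm2)
  refine ⟨⟨⟨ρ₀, P₁₀, le_of_eq hρ₀.symm, ?_, hP₁₀nn, hP₁₀le, hcon0, hobjv.symm⟩, ?_⟩, hcon0, hobjv⟩
  · rw [hρ₀, div_lt_one (by positivity)]; linarith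
  · -- upper bound
    rintro w ⟨ρ, P₁, hρlb, hρub, hP₁0, hP₁max, hcon, hw⟩
    have hgpos : 0 < h1 * (1 - ρ) := by nlinarith
    have hρρ : ρ₀ ≤ ρ := hρ₀ ▸ hρlb
    have hgle : h1 * (1 - ρ) ≤ h1 * (1 - ρ₀) := by nlinarith
    -- from the constraint: h1(1-ρ)P₁ = (2^r - 1) σ2
    have hx : 1 + h1 * (1 - ρ) * P₁ / σ2 = (2:ℝ) ^ r := by
      have hxpos : 0 < 1 + h1 * (1 - ρ) * P₁ / σ2 := by positivity
      rw [← hcon, Real.rpow_logb (by norm_num) (by norm_num) hxpos]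
    have hprod : h1 * (1 - ρ) * P₁ = ((2:ℝ) ^ r - 1) * σ2 := by
      field_simp at hx
      linarith
    -- P₁₀ ≤ P₁
    have hP₁ge : P₁₀ ≤ P₁ := by
      have key : h1 * (1 - ρ₀) * P₁₀ = h1 * (1 - ρ) * P₁ := by rw [hc, hprod]
      nlinarith [mul_le_mul_of_nonneg_right hgle hP₁0]
    -- conclude
    have h1le : Real.logb 2 ((h2 * Pmax + σ2) / (h2 * P₁ + σ2)) ≤ v := by
      rw [hveq]
      apply (Real.logb_le_logb hb1 (by positivity) (by positivity)).2
      apply div_le_div_of_nonneg_left (by positivity) hden0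
      nlinarith
    calc w = obj ρ P₁ := hw
      _ ≤ _ := by rw [hobj]; exact min_le_left _ _
      _ ≤ v := h1le
end
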